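/- Let n > 2k and let B := A_k(n,k) = {A ∈ binom([n],k) : 1 ∈ A, A ∩ [2,k+1] ≠ ∅} ∪ {[2,k+1]}. Then D(S_1) \ D(B) = binom([k+2,n], k-1), where S_1 is the full star at 1; in particular |D(S_1) \ D(B)| = C(n-k-1, k-1). -/

import Mathlib

open Finset

def diffFam (F : Finset (Finset ℕ)) : Finset (Finset ℕ) :=
  (F ×ˢ F).image fun p => p.1 \ p.2

/-- The full star of `k`-subsets of `[n]` at element `1`. -/
def fullStar1 (n k : ℕ) : Finset (Finset ℕ) :=
  ((Finset.Icc 1 n).powersetCard k).filter fun A => 1 ∈ A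

/-- The family `A_k(n,k)`. -/
def famAk (n k : ℕ) : Finset (Finset ℕ) :=
  (((Finset.Icc 1 n).powersetCard k).filter fun A =>
      1 ∈ A ∧ (A ∩ Finset.Icc 2 (k + 1)).Nonempty) ∪ {Finset.Icc 2 (k + 1)}

lemma mem_diffFam_iff {F : Finset (Finset ℕ)} {D : Finset ℕ} :
    D ∈ diffFam F ↔ ∃ A ∈ F, ∃ B ∈ F, A \ B = D := by
  constructor
  · intro h
    obtain ⟨p, hp, hpe⟩ := Finset.mem_image.1 h
    obtain ⟨h1, h2⟩ := Finset.mem_product.1 hp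
    exact ⟨p.1, h1, p.2, h2, hpe⟩
  · rintro ⟨A, hA, B, hB, rfl⟩
    exact Finset.mem_image.2 ⟨(A, B), Finset.mem_product.2 ⟨hA, hB⟩, rfl⟩

lemma mem_famAk_of {n k : ℕ} {A : Finset ℕ} (h1 : A ⊆ Finset.Icc 1 n) (h2 : A.card = k)
    (h3 : 1 ∈ A) (h4 : (A ∩ Finset.Icc 2 (k + 1)).Nonempty) : A ∈ famAk n k :=
  Finset.mem_union_left _ (Finset.mem_filter.2 ⟨Finset.mem_powersetCard.2 ⟨h1, h2⟩, h3, h4⟩)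

lemma mem_fullStar1_of {n k : ℕ} {A : Finset ℕ} (h1 : A ⊆ Finset.Icc 1 n) (h2 : A.card = k)
    (h3 : 1 ∈ A) : A ∈ fullStar1 n k :=
  Finset.mem_filter.2 ⟨Finset.mem_powersetCard.2 ⟨h1, h2⟩, h3⟩

lemma sdiff_eq_of_subset' {D A₁ A₂ : Finset ℕ} (h1 : D ⊆ A₁) (h2 : Disjoint D A₂)
    (h3 : A₁ \ D ⊆ A₂) : A₁ \ A₂ = D := by
  ext x
  simp only [mem_sdiff]
  constructor
  · rintro ⟨hx1, hx2⟩
    by_contra hxD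
    exact hx2 (h3 (mem_sdiff.2 ⟨hx1, hxD⟩))
  · intro hx
    exact ⟨h1 hx, Finset.disjoint_left.1 h2 hx⟩

/-- Key construction: any subset of `[2,n]` of size at most `k-1` which either has size
at most `k-2` or meets `[2,k+1]` is a difference of two members of `famAk`. -/
lemma key (n k : ℕ) (hk : 2 ≤ k) (hn : 2 * k < n) {D : Finset ℕ}
    (hD : D ⊆ Finset.Icc 2 n) (hle : D.card ≤ k - 1)
    (h : D.card ≤ k - 2 ∨ (D ∩ Finset.Icc 2 (k + 1)).Nonempty) :
    D ∈ diffFam (famAk n k) := by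
  have hIccsub : Finset.Icc 2 n ⊆ Finset.Icc 1 n := by
    intro x hx; simp only [Finset.mem_Icc] at *; omega
  have hn1 : (Finset.Icc 2 n).card = n - 1 := by rw [Nat.card_Icc]; omega
  have hkc : (Finset.Icc 2 (k + 1)).card = k := by rw [Nat.card_Icc]; omega
  have h1n : (1 : ℕ) ∈ Finset.Icc 1 n := by simp only [Finset.mem_Icc]; omega
  have h1D : (1 : ℕ) ∉ D := fun hx => by have := hD hx; simp only [Finset.mem_Icc] at this; omega
  -- pick e ∈ [2, k+1] \ D
  have hepos : 0 < (Finset.Icc 2 (k + 1) \ D).card := by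
    have := Finset.le_card_sdiff D (Finset.Icc 2 (k + 1))
    omega
  obtain ⟨e, he⟩ := Finset.card_pos.1 hepos
  rw [Finset.mem_sdiff] at he
  obtain ⟨heI, heD⟩ := he
  have heI' : e ∈ Finset.Icc 2 n := by
    simp only [Finset.mem_Icc] at *; omega
  rcases h with hd | ⟨y, hy⟩
  · -- Case 1 : |D| ≤ k - 2
    -- T = insert e T₀ with T₀ ⊆ [2,n] \ (insert e D), |T₀| = k - 2 - |D|
    have hT0 : k - 2 - D.card ≤ (Finset.Icc 2 n \ insert e D).card := by
      have h1 := Finset.le_card_sdiff (insert e D) (Finset.Icc 2 n)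
      have h2 : (insert e D).card ≤ D.card + 1 := Finset.card_insert_le _ _
      omega
    obtain ⟨T₀, hT₀sub, hT₀card⟩ := Finset.exists_subset_card_eq hT0
    have hT₀sub' : ∀ x ∈ T₀, x ∈ Finset.Icc 2 n ∧ x ∉ insert e D := fun x hx => Finset.mem_sdiff.1 (hT₀sub hx)
    have heT₀ : e ∉ T₀ := fun hx => (hT₀sub' e hx).2 (Finset.mem_insert_self e D)
    set T : Finset ℕ := insert e T₀ with hTdef
    have hTsub : T ⊆ Finset.Icc 2 n := by
      intro x hx
      rcases Finset.mem_insert.1 hx with rfl | hx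
      · exact heI'
      · exact (hT₀sub' x hx).1
    have hTD : Disjoint D T := by
      rw [Finset.disjoint_right]
      intro x hx
      rcases Finset.mem_insert.1 hx with rfl | hx
      · exact heD
      · exact fun hxD => (hT₀sub' x hx).2 (Finset.mem_insert_of_mem hxD)
    have hTcard : T.card = k - 1 - D.card := by
      rw [hTdef, Finset.card_insert_of_notMem heT₀, hT₀card]; omega
    -- U ⊆ [2,n] \ (D ∪ T), |U| = |D|
    have hU0 : D.card ≤ (Finset.Icc 2 n \ (D ∪ T)).card := by
      have h1 := Finset.le_card_sdiff (D ∪ T) (Finset.Icc 2 n)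
      have h2 : (D ∪ T).card ≤ D.card + T.card := Finset.card_union_le _ _
      omega
    obtain ⟨U, hUsub, hUcard⟩ := Finset.exists_subset_card_eq hU0
    have hUsub' : ∀ x ∈ U, x ∈ Finset.Icc 2 n ∧ x ∉ D ∪ T := fun x hx => Finset.mem_sdiff.1 (hUsub hx)
    have hUD : Disjoint D U := by
      rw [Finset.disjoint_right]
      intro x hx hxD
      exact (hUsub' x hx).2 (Finset.mem_union_left _ hxD)
    have hUT : Disjoint T U := by
      rw [Finset.disjoint_right]
      intro x hx hxT
      exact (hUsub' x hx).2 (Finset.mem_union_right _ hxT)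
    set A₁ : Finset ℕ := insert 1 (D ∪ T) with hA₁def
    set A₂ : Finset ℕ := insert 1 (T ∪ U) with hA₂def
    have h1DT : (1 : ℕ) ∉ D ∪ T := by
      intro hx
      rcases Finset.mem_union.1 hx with hx | hx
      · exact h1D hx
      · have := hTsub hx; simp only [Finset.mem_Icc] at this; omega
    have h1TU : (1 : ℕ) ∉ T ∪ U := by
      intro hx
      rcases Finset.mem_union.1 hx with hx | hx
      · have := hTsub hx; simp only [Finset.mem_Icc] at this; omega
      · have := (hUsub' 1 hx).1; simp only [Finset.mem_Icc] at this; omega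
    have hA₁mem : A₁ ∈ famAk n k := by
      apply mem_famAk_of
      · rw [hA₁def, Finset.insert_subset_iff]
        exact ⟨h1n, (Finset.union_subset hD hTsub).trans hIccsub⟩
      · rw [hA₁def, Finset.card_insert_of_notMem h1DT, Finset.card_union_of_disjoint hTD,
          hTcard]
        omega
      · exact Finset.mem_insert_self _ _
      · exact ⟨e, Finset.mem_inter.2 ⟨Finset.mem_insert_of_mem
          (Finset.mem_union_right _ (Finset.mem_insert_self e T₀)), heI⟩⟩
    have hA₂mem : A₂ ∈ famAk n k := by
      apply mem_famAk_of
      · rw [hA₂def, Finset.insert_subset_iff]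
        refine ⟨h1n, (Finset.union_subset hTsub ?_).trans hIccsub⟩
        exact fun x hx => (hUsub' x hx).1
      · rw [hA₂def, Finset.card_insert_of_notMem h1TU, Finset.card_union_of_disjoint hUT,
          hTcard, hUcard]
        omega
      · exact Finset.mem_insert_self _ _
      · exact ⟨e, Finset.mem_inter.2 ⟨Finset.mem_insert_of_mem
          (Finset.mem_union_left _ (Finset.mem_insert_self e T₀)), heI⟩⟩
    have hdiff : A₁ \ A₂ = D := by
      apply sdiff_eq_of_subset'
      · exact fun x hx => Finset.mem_insert_of_mem (Finset.mem_union_left _ hx)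
      · rw [Finset.disjoint_right]
        intro x hx hxD
        rcases Finset.mem_insert.1 hx with rfl | hx
        · exact h1D hxD
        · rcases Finset.mem_union.1 hx with hx | hx
          · exact Finset.disjoint_left.1 hTD hxD hx
          · exact Finset.disjoint_left.1 hUD hxD hx
      · intro x hx
        obtain ⟨hx1, hx2⟩ := Finset.mem_sdiff.1 hx
        rcases Finset.mem_insert.1 hx1 with rfl | hx1
        · exact Finset.mem_insert_self _ _
        · rcases Finset.mem_union.1 hx1 with hx1 | hx1
          · exact absurd hx1 hx2
          · exact Finset.mem_insert_of_mem (Finset.mem_union_left _ hx1)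
    exact mem_diffFam_iff.2 ⟨A₁, hA₁mem, A₂, hA₂mem, hdiff⟩
  · -- Case 2 : D meets [2, k+1]; y ∈ D ∩ [2,k+1]
    rw [Finset.mem_inter] at hy
    have hDpos : 0 < D.card := Finset.card_pos.2 ⟨y, hy.1⟩
    -- T ⊆ [2,n] \ insert e D, |T| = k - 1 - |D|
    have hT0 : k - 1 - D.card ≤ (Finset.Icc 2 n \ insert e D).card := by
      have h1 := Finset.le_card_sdiff (insert e D) (Finset.Icc 2 n)
      have h2 : (insert e D).card ≤ D.card + 1 := Finset.card_insert_le _ _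
      omega
    obtain ⟨T, hTsub0, hTcard⟩ := Finset.exists_subset_card_eq hT0
    have hTsub' : ∀ x ∈ T, x ∈ Finset.Icc 2 n ∧ x ∉ insert e D := fun x hx => Finset.mem_sdiff.1 (hTsub0 hx)
    have hTsub : T ⊆ Finset.Icc 2 n := fun x hx => (hTsub' x hx).1
    have heT : e ∉ T := fun hx => (hTsub' e hx).2 (Finset.mem_insert_self e D)
    have hTD : Disjoint D T := by
      rw [Finset.disjoint_right]
      intro x hx hxD
      exact (hTsub' x hx).2 (Finset.mem_insert_of_mem hxD)
    -- U ⊆ [2,n] \ (insert e (D ∪ T)), |U| = |D| - 1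
    have hU0 : D.card - 1 ≤ (Finset.Icc 2 n \ insert e (D ∪ T)).card := by
      have h1 := Finset.le_card_sdiff (insert e (D ∪ T)) (Finset.Icc 2 n)
      have h2 : (insert e (D ∪ T)).card ≤ D.card + T.card + 1 := by
        calc (insert e (D ∪ T)).card ≤ (D ∪ T).card + 1 := Finset.card_insert_le _ _
        _ ≤ D.card + T.card + 1 := by have := Finset.card_union_le D T; omega
      omega
    obtain ⟨U, hUsub, hUcard⟩ := Finset.exists_subset_card_eq hU0
    have hUsub' : ∀ x ∈ U, x ∈ Finset.Icc 2 n ∧ x ∉ insert e (D ∪ T) := fun x hx => Finset.mem_sdiff.1 (hUsub hx)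
    have heU : e ∉ U := fun hx => (hUsub' e hx).2 (Finset.mem_insert_self _ _)
    have hUD : Disjoint D U := by
      rw [Finset.disjoint_right]
      intro x hx hxD
      exact (hUsub' x hx).2 (Finset.mem_insert_of_mem (Finset.mem_union_left _ hxD))
    have hUT : Disjoint T U := by
      rw [Finset.disjoint_right]
      intro x hx hxT
      exact (hUsub' x hx).2 (Finset.mem_insert_of_mem (Finset.mem_union_right _ hxT))
    set A₁ : Finset ℕ := insert 1 (D ∪ T) with hA₁def
    set A₂ : Finset ℕ := insert 1 (insert e (T ∪ U)) with hA₂def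
    have h1DT : (1 : ℕ) ∉ D ∪ T := by
      intro hx
      rcases Finset.mem_union.1 hx with hx | hx
      · exact h1D hx
      · have := hTsub hx; simp only [Finset.mem_Icc] at this; omega
    have h1eTU : (1 : ℕ) ∉ insert e (T ∪ U) := by
      intro hx
      rcases Finset.mem_insert.1 hx with hx | hx
      · simp only [Finset.mem_Icc] at heI'; omega
      · rcases Finset.mem_union.1 hx with hx | hx
        · have := hTsub hx; simp only [Finset.mem_Icc] at this; omega
        · have := (hUsub' 1 hx).1; simp only [Finset.mem_Icc] at this; omega
    have heTU : e ∉ T ∪ U := by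
      intro hx
      rcases Finset.mem_union.1 hx with hx | hx
      · exact heT hx
      · exact heU hx
    have hA₁mem : A₁ ∈ famAk n k := by
      apply mem_famAk_of
      · rw [hA₁def, Finset.insert_subset_iff]
        exact ⟨h1n, (Finset.union_subset hD hTsub).trans hIccsub⟩
      · rw [hA₁def, Finset.card_insert_of_notMem h1DT, Finset.card_union_of_disjoint hTD,
          hTcard]
        omega
      · exact Finset.mem_insert_self _ _
      · exact ⟨y, Finset.mem_inter.2 ⟨Finset.mem_insert_of_mem
          (Finset.mem_union_left _ hy.1), hy.2⟩⟩
    have hA₂mem : A₂ ∈ famAk n k := by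
      apply mem_famAk_of
      · rw [hA₂def, Finset.insert_subset_iff, Finset.insert_subset_iff]
        refine ⟨h1n, hIccsub heI', (Finset.union_subset hTsub ?_).trans hIccsub⟩
        exact fun x hx => (hUsub' x hx).1
      · rw [hA₂def, Finset.card_insert_of_notMem h1eTU, Finset.card_insert_of_notMem heTU,
          Finset.card_union_of_disjoint hUT, hTcard, hUcard]
        omega
      · exact Finset.mem_insert_self _ _
      · exact ⟨e, Finset.mem_inter.2 ⟨Finset.mem_insert_of_mem (Finset.mem_insert_self _ _),
          heI⟩⟩
    have hdiff : A₁ \ A₂ = D := by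
      apply sdiff_eq_of_subset'
      · exact fun x hx => Finset.mem_insert_of_mem (Finset.mem_union_left _ hx)
      · rw [Finset.disjoint_right]
        intro x hx hxD
        rcases Finset.mem_insert.1 hx with rfl | hx
        · exact h1D hxD
        · rcases Finset.mem_insert.1 hx with rfl | hx
          · exact heD hxD
          · rcases Finset.mem_union.1 hx with hx | hx
            · exact Finset.disjoint_left.1 hTD hxD hx
            · exact Finset.disjoint_left.1 hUD hxD hx
      · intro x hx
        obtain ⟨hx1, hx2⟩ := Finset.mem_sdiff.1 hx
        rcases Finset.mem_insert.1 hx1 with rfl | hx1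
        · exact Finset.mem_insert_self _ _
        · rcases Finset.mem_union.1 hx1 with hx1 | hx1
          · exact absurd hx1 hx2
          · exact Finset.mem_insert_of_mem
              (Finset.mem_insert_of_mem (Finset.mem_union_left _ hx1))
    exact mem_diffFam_iff.2 ⟨A₁, hA₁mem, A₂, hA₂mem, hdiff⟩

theorem stmt6 (n k : ℕ) (hk : 2 ≤ k) (hn : 2 * k < n) :
    diffFam (fullStar1 n k) \ diffFam (famAk n k) =
      (Finset.Icc (k + 2) n).powersetCard (k - 1) ∧
    (diffFam (fullStar1 n k) \ diffFam (famAk n k)).card = (n - k - 1).choose (k - 1) := by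
  have hIccsub : Finset.Icc 2 n ⊆ Finset.Icc 1 n := by
    intro x hx; simp only [Finset.mem_Icc] at *; omega
  have h1n : (1 : ℕ) ∈ Finset.Icc 1 n := by simp only [Finset.mem_Icc]; omega
  have hset : diffFam (fullStar1 n k) \ diffFam (famAk n k) =
      (Finset.Icc (k + 2) n).powersetCard (k - 1) := by
    ext D
    simp only [Finset.mem_sdiff, Finset.mem_powersetCard]
    constructor
    · rintro ⟨hD1, hD2⟩
      obtain ⟨A, hA, B, hB, rfl⟩ := mem_diffFam_iff.1 hD1
      obtain ⟨hAp, hA1⟩ := Finset.mem_filter.1 hA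
      obtain ⟨hAsub, hAcard⟩ := Finset.mem_powersetCard.1 hAp
      obtain ⟨hBp, hB1⟩ := Finset.mem_filter.1 hB
      obtain ⟨hBsub, hBcard⟩ := Finset.mem_powersetCard.1 hBp
      have hDsub2 : A \ B ⊆ Finset.Icc 2 n := by
        intro x hx
        obtain ⟨hx1, hx2⟩ := Finset.mem_sdiff.1 hx
        have hx3 := hAsub hx1
        simp only [Finset.mem_Icc] at *
        have : x ≠ 1 := fun h => hx2 (h ▸ hB1)
        omega
      have hcardAB : (A \ B).card + (A ∩ B).card = k := by
        rw [Finset.card_sdiff_add_card_inter, hAcard]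
      have h1AB : 1 ∈ A ∩ B := Finset.mem_inter.2 ⟨hA1, hB1⟩
      have hABpos : 0 < (A ∩ B).card := Finset.card_pos.2 ⟨1, h1AB⟩
      have hDle : (A \ B).card ≤ k - 1 := by omega
      -- use the key lemma contrapositive
      have hkey : ¬((A \ B).card ≤ k - 2 ∨ ((A \ B) ∩ Finset.Icc 2 (k + 1)).Nonempty) :=
        fun h => hD2 (key n k hk hn hDsub2 hDle h)
      push_neg at hkey
      obtain ⟨hcard2, hint⟩ := hkey
      constructor
      · intro x hx
        have hx2 := hDsub2 hx
        have hx3 : x ∉ Finset.Icc 2 (k + 1) := fun h =>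
          (Finset.notMem_empty x) (hint ▸ Finset.mem_inter.2 ⟨hx, h⟩)
        simp only [Finset.mem_Icc] at *
        omega
      · omega
    · rintro ⟨hsub, hcard⟩
      have hDsub2 : D ⊆ Finset.Icc 2 n := by
        intro x hx
        have := hsub hx
        simp only [Finset.mem_Icc] at *
        omega
      have h1D : (1 : ℕ) ∉ D := fun hx => by
        have := hsub hx; simp only [Finset.mem_Icc] at this; omega
      have hDhi : ∀ x ∈ D, k + 2 ≤ x := fun x hx => by
        have := hsub hx; simp only [Finset.mem_Icc] at this; omega
      constructor
      · -- D ∈ diffFam (fullStar1 n k)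
        set A₁ : Finset ℕ := insert 1 D with hA₁def
        set A₂ : Finset ℕ := insert 1 (Finset.Icc 2 k) with hA₂def
        have h1Icc2k : (1 : ℕ) ∉ Finset.Icc 2 k := by simp
        have hA₁mem : A₁ ∈ fullStar1 n k := by
          apply mem_fullStar1_of
          · rw [hA₁def, Finset.insert_subset_iff]
            exact ⟨h1n, hDsub2.trans hIccsub⟩
          · rw [hA₁def, Finset.card_insert_of_notMem h1D, hcard]; omega
          · exact Finset.mem_insert_self _ _
        have hA₂mem : A₂ ∈ fullStar1 n k := by
          apply mem_fullStar1_of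
          · rw [hA₂def, Finset.insert_subset_iff]
            refine ⟨h1n, ?_⟩
            intro x hx
            simp only [Finset.mem_Icc] at *
            omega
          · rw [hA₂def, Finset.card_insert_of_notMem h1Icc2k, Nat.card_Icc]; omega
          · exact Finset.mem_insert_self _ _
        have hdiff : A₁ \ A₂ = D := by
          apply sdiff_eq_of_subset'
          · exact fun x hx => Finset.mem_insert_of_mem hx
          · rw [Finset.disjoint_right]
            intro x hx hxD
            rcases Finset.mem_insert.1 hx with rfl | hx
            · exact h1D hxD
            · have := hDhi x hxD
              simp only [Finset.mem_Icc] at hx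
              omega
          · intro x hx
            obtain ⟨hx1, hx2⟩ := Finset.mem_sdiff.1 hx
            rcases Finset.mem_insert.1 hx1 with rfl | hx1
            · exact Finset.mem_insert_self _ _
            · exact absurd hx1 hx2
        exact mem_diffFam_iff.2 ⟨A₁, hA₁mem, A₂, hA₂mem, hdiff⟩
      · -- D ∉ diffFam (famAk n k)
        intro hD
        obtain ⟨A, hA, B, hB, hABD⟩ := mem_diffFam_iff.1 hD
        have hDne : D.Nonempty := Finset.card_pos.1 (by omega)
        obtain ⟨x, hx⟩ := hDne
        have hxhi := hDhi x hx
        rcases Finset.mem_union.1 hA with hA | hA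
        · obtain ⟨hAp, hA1, hAint⟩ := Finset.mem_filter.1 hA
          obtain ⟨hAsub, hAcard⟩ := Finset.mem_powersetCard.1 hAp
          rcases Finset.mem_union.1 hB with hB | hB
          · obtain ⟨hBp, hB1, _⟩ := Finset.mem_filter.1 hB
            obtain ⟨hBsub, hBcard⟩ := Finset.mem_powersetCard.1 hBp
            have hcardAB : (A \ B).card + (A ∩ B).card = k := by
              rw [Finset.card_sdiff_add_card_inter, hAcard]
            have h1AB : 1 ∈ A ∩ B := Finset.mem_inter.2 ⟨hA1, hB1⟩
            have hABcard1 : (A ∩ B).card = 1 := by rw [hABD] at hcardAB; omega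
            have hABeq : A ∩ B = {1} :=
              Finset.eq_singleton_iff_unique_mem.2 ⟨h1AB, fun y hy => by
                have := Finset.card_le_one.1 (le_of_eq hABcard1) y hy 1 h1AB
                exact this⟩
            obtain ⟨y, hy⟩ := hAint
            rw [Finset.mem_inter] at hy
            have hy2 : y ∈ Finset.Icc 2 (k + 1) := hy.2
            simp only [Finset.mem_Icc] at hy2
            have hyB : y ∉ B := fun h => by
              have : y ∈ A ∩ B := Finset.mem_inter.2 ⟨hy.1, h⟩
              rw [hABeq] at this
              simp at this
              omega
            have hyD : y ∈ D := hABD ▸ Finset.mem_sdiff.2 ⟨hy.1, hyB⟩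
            have := hDhi y hyD
            omega
          · -- B = Icc 2 (k+1)
            rw [Finset.mem_singleton] at hB
            have h1B : (1 : ℕ) ∉ B := by rw [hB]; simp
            have h1inD : (1 : ℕ) ∈ D := hABD ▸ Finset.mem_sdiff.2 ⟨hA1, h1B⟩
            have := hDhi 1 h1inD
            omega
        · -- A = Icc 2 (k+1)
          rw [Finset.mem_singleton] at hA
          have hxA : x ∈ A := (Finset.mem_sdiff.1 (hABD ▸ hx : x ∈ A \ B)).1
          rw [hA] at hxA
          simp only [Finset.mem_Icc] at hxA
          omega
  refine ⟨hset, ?_⟩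
  rw [hset, Finset.card_powersetCard, Nat.card_Icc]
  congr 1
  omega
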